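/- (Nonlocality with PI, witness direction) Suppose η̃_μ ρ̃_μ − η̃_ω ρ̃_ω ∈ SEP* for all ω ∈ Ω_S, and for some ω• the operator η̃_μ ρ̃_μ − η̃_{ω•} ρ̃_{ω•} is an entanglement witness (in SEP* but not PSD). Then there exists a POVM achieving averaged success probability strictly greater than η̃_μ, hence p_SEP^PI(E,S) = 2η̃_μ < p_G^PI(E,S). -/

import Mathlib

open Matrix
open scoped ComplexOrder

/-- Hermitian operators on the bipartite space `ℂ^dA ⊗ ℂ^dB`, modeled as matrices
indexed by `Fin dA × Fin dB`. -/
abbrev Mat (dA dB : ℕ) := Matrix (Fin dA × Fin dB) (Fin dA × Fin dB) ℂ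

/-- A bipartite operator is separable if it is a finite sum of Kronecker products of
positive-semidefinite operators on the two factors. -/
def IsSep {dA dB : ℕ} (E : Mat dA dB) : Prop :=
  ∃ (n : ℕ) (A : Fin n → Matrix (Fin dA) (Fin dA) ℂ)
    (B : Fin n → Matrix (Fin dB) (Fin dB) ℂ),
    (∀ l, (A l).PosSemidef) ∧ (∀ l, (B l).PosSemidef) ∧
      E = ∑ l, Matrix.kroneckerMap (· * ·) (A l) (B l)

/-- Membership in the dual cone `SEP*` (block positivity): Hermitian with
`Tr(E F) ≥ 0` for every separable `F`. -/
def InSEPdual {dA dB : ℕ} (E : Mat dA dB) : Prop :=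
  E.IsHermitian ∧ ∀ F : Mat dA dB, IsSep F → 0 ≤ (E * F).trace

lemma trace_mul_vecMulVec' {n : Type*} [Fintype n] [DecidableEq n] (A : Matrix n n ℂ)
    (x : n → ℂ) : (A * Matrix.vecMulVec x (star x)).trace = star x ⬝ᵥ (A *ᵥ x) := by
  simp only [Matrix.trace, Matrix.diag, Matrix.mul_apply, vecMulVec_apply, dotProduct, mulVec,
    dotProduct, Pi.star_apply, Finset.mul_sum]
  refine Finset.sum_congr rfl fun i _ => Finset.sum_congr rfl fun j _ => by ring

lemma vecMulVec_mul_vecMulVec' {n : Type*} [Fintype n] (x v y w : n → ℂ) :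
    Matrix.vecMulVec x v * Matrix.vecMulVec y w = (v ⬝ᵥ y) • Matrix.vecMulVec x w := by
  ext i j
  simp only [Matrix.mul_apply, vecMulVec_apply, Matrix.smul_apply, dotProduct, smul_eq_mul,
    Finset.sum_mul, Finset.mul_sum]
  refine Finset.sum_congr rfl fun k _ => by ring

lemma vecMulVec_mulVec' {n : Type*} [Fintype n] (x y : n → ℂ) :
    Matrix.vecMulVec x (star x) *ᵥ y = (star x ⬝ᵥ y) • x := by
  ext i
  simp only [mulVec, dotProduct, vecMulVec_apply, Pi.smul_apply, Pi.star_apply, smul_eq_mul]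
  rw [Finset.sum_mul]
  exact Finset.sum_congr rfl fun j _ => by ring

theorem pi_nonlocality_witness {dA dB : ℕ}
    (η : Fin 4 → ℝ) (ρ : Fin 4 → Mat dA dB)
    (hη : ∀ i, 0 < η i) (hsum : ∑ i, η i = 1)
    (hρ : ∀ i, (ρ i).PosSemidef ∧ (ρ i).trace = 1)
    (s c : Fin 2 → Fin 4) (hbij : Function.Bijective (Sum.elim s c))
    (ηt : Fin 2 × Fin 2 → ℝ) (ρt : Fin 2 × Fin 2 → Mat dA dB)
    (hηt : ∀ ω, ηt ω = (η (s ω.1) + η (c ω.2)) / 2)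
    (hρt : ∀ ω, ρt ω = (((η (s ω.1) + η (c ω.2) : ℝ) : ℂ))⁻¹ •
        ((η (s ω.1) : ℂ) • ρ (s ω.1) + (η (c ω.2) : ℂ) • ρ (c ω.2)))
    (μ : Fin 2 × Fin 2)
    (hdual : ∀ ω, InSEPdual ((ηt μ : ℂ) • ρt μ - (ηt ω : ℂ) • ρt ω))
    (ωb : Fin 2 × Fin 2)
    (hEW : InSEPdual ((ηt μ : ℂ) • ρt μ - (ηt ωb : ℂ) • ρt ωb) ∧
      ¬ ((ηt μ : ℂ) • ρt μ - (ηt ωb : ℂ) • ρt ωb).PosSemidef) :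
    (∃ M : Fin 2 × Fin 2 → Mat dA dB, (∀ ω, (M ω).PosSemidef) ∧ ∑ ω, M ω = 1 ∧
        ηt μ < ∑ ω, ηt ω * ((ρt ω * M ω).trace).re) ∧
    (∀ M : Fin 2 × Fin 2 → Mat dA dB, (∀ ω, IsSep (M ω)) → ∑ ω, M ω = 1 →
        ∑ ω, ηt ω * ((ρt ω * M ω).trace).re ≤ ηt μ) := by
  classical
  -- each averaged state has unit trace
  have htr : ∀ ω, (ρt ω).trace = 1 := by
    intro ω
    have hne : ((η (s ω.1)) : ℂ) + ((η (c ω.2)) : ℂ) ≠ 0 := by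
      have : (0:ℝ) < η (s ω.1) + η (c ω.2) := add_pos (hη _) (hη _)
      exact_mod_cast ne_of_gt this
    rw [hρt ω, Matrix.trace_smul, Matrix.trace_add, Matrix.trace_smul, Matrix.trace_smul,
      (hρ (s ω.1)).2, (hρ (c ω.2)).2]
    push_cast
    simp only [smul_eq_mul, mul_one]
    exact inv_mul_cancel₀ hne
  -- the witness
  set W : Mat dA dB := (ηt μ : ℂ) • ρt μ - (ηt ωb : ℂ) • ρt ωb with hWdef
  have hWherm : W.IsHermitian := hEW.1.1
  have hμωb : μ ≠ ωb := by
    rintro rfl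
    exact hEW.2 (by simpa [hWdef, sub_self] using (Matrix.PosSemidef.zero :
      (0 : Mat dA dB).PosSemidef))
  obtain ⟨x, hx⟩ : ∃ x : Fin dA × Fin dB → ℂ, ¬ (0 ≤ star x ⬝ᵥ (W *ᵥ x)) := by
    by_contra h
    push_neg at h
    exact hEW.2 (Matrix.PosSemidef.of_dotProduct_mulVec_nonneg hWherm h)
  set q : ℂ := star x ⬝ᵥ (W *ᵥ x) with hq
  have hstar : star q = q := by
    conv_lhs => rw [hq, Matrix.star_dotProduct, star_star, Matrix.star_mulVec,
      ← Matrix.dotProduct_mulVec, hWherm.eq, ← hq]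
  have him : q.im = 0 := by
    have h := congrArg Complex.im hstar
    simp only [Complex.star_def, Complex.conj_im] at h
    linear_combination (-1/2 : ℝ) * h
  have hqreal : q = (q.re : ℂ) := by
    rw [← Complex.re_add_im q, him]
    simp
  have hqneg : q.re < 0 := by
    by_contra h
    push_neg at h
    apply hx
    show (0 : ℂ) ≤ q
    rw [hqreal]
    exact_mod_cast h
  have hx0 : x ≠ 0 := by
    rintro rfl
    apply hx
    simp [hq]
  clear hx
  -- the squared norm of x
  set r : ℝ := ∑ i, Complex.normSq (x i) with hr
  have hrpos : 0 < r := by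
    obtain ⟨i, hi⟩ := Function.ne_iff.mp hx0
    exact Finset.sum_pos' (fun j _ => Complex.normSq_nonneg _)
      ⟨i, Finset.mem_univ i, by simpa using hi⟩
  have hrne : ((r : ℝ) : ℂ) ≠ 0 := by exact_mod_cast ne_of_gt hrpos
  have hnorm : star x ⬝ᵥ x = ((r : ℝ) : ℂ) := by
    rw [hr]
    push_cast
    refine Finset.sum_congr rfl fun i _ => ?_
    simp [Complex.normSq_eq_conj_mul_self]
  -- the rank-one projection P
  set P : Mat dA dB := ((r : ℝ) : ℂ)⁻¹ • Matrix.vecMulVec x (star x) with hP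
  have hVherm : (Matrix.vecMulVec x (star x)).IsHermitian := by
    ext i j
    simp [Matrix.conjTranspose_apply, vecMulVec_apply, mul_comm]
  have hPherm : P.IsHermitian := by
    rw [hP, Matrix.IsHermitian, Matrix.conjTranspose_smul, hVherm.eq]
    congr 1
    simp [← Complex.ofReal_inv, Complex.star_def, Complex.conj_ofReal]
  have hPpsd : P.PosSemidef := by
    refine Matrix.PosSemidef.of_dotProduct_mulVec_nonneg hPherm fun y => ?_
    rw [hP, Matrix.smul_mulVec, dotProduct_smul, vecMulVec_mulVec' x y,
      dotProduct_smul]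
    have h1 : star y ⬝ᵥ x = (starRingEnd ℂ) (star x ⬝ᵥ y) := by
      simp only [dotProduct, map_sum, Pi.star_apply]
      exact Finset.sum_congr rfl fun i _ => by
        rw [_root_.map_mul]
        simp [Complex.star_def, mul_comm]
    have h2 : ((r : ℝ) : ℂ)⁻¹ • ((star x ⬝ᵥ y) • (star y ⬝ᵥ x)) =
        (((r⁻¹ * Complex.normSq (star x ⬝ᵥ y) : ℝ)) : ℂ) := by
      rw [h1]
      simp only [smul_eq_mul, Complex.mul_conj]
      push_cast
      ring
    rw [h2]
    have h3 : (0:ℝ) ≤ r⁻¹ * Complex.normSq (star x ⬝ᵥ y) :=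
      mul_nonneg (inv_nonneg.mpr hrpos.le) (Complex.normSq_nonneg _)
    exact_mod_cast h3
  have hP2 : P * P = P := by
    rw [hP, Matrix.smul_mul, Matrix.mul_smul, vecMulVec_mul_vecMulVec', hnorm,
      smul_smul, smul_smul]
    congr 1
    field_simp
  have h1Ppsd : ((1 : Mat dA dB) - P).PosSemidef := by
    have key : (1 : Mat dA dB) - P = ((1 : Mat dA dB) - P)ᴴ * ((1 : Mat dA dB) - P) := by
      rw [Matrix.conjTranspose_sub, Matrix.conjTranspose_one, hPherm.eq,
        Matrix.sub_mul, Matrix.mul_sub, Matrix.mul_sub, hP2]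
      simp only [Matrix.one_mul, Matrix.mul_one]
      abel
    rw [key]
    exact Matrix.posSemidef_conjTranspose_mul_self _
  -- the candidate POVM
  set M : Fin 2 × Fin 2 → Mat dA dB :=
    fun ω => if ω = μ then (1 : Mat dA dB) - P else if ω = ωb then P else 0 with hM
  have hMsplit : ∀ ω, M ω = (if ω = μ then (1 : Mat dA dB) - P else 0) +
      (if ω = ωb then P else 0) := by
    intro ω
    by_cases h1 : ω = μ
    · subst h1
      simp [hM, hμωb]
    · by_cases h2 : ω = ωb
      · subst h2
        simp [hM, Ne.symm hμωb]
      · simp [hM, h1, h2]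
  have hMsum : ∑ ω, M ω = 1 := by
    simp only [hMsplit, Finset.sum_add_distrib, Finset.sum_ite_eq', Finset.mem_univ, if_true]
    abel
  have hMpsd : ∀ ω, (M ω).PosSemidef := by
    intro ω
    by_cases h1 : ω = μ
    · simpa [hM, h1] using h1Ppsd
    · by_cases h2 : ω = ωb
      · subst h2
        simpa [hM, Ne.symm hμωb] using hPpsd
      · simpa [hM, h1, h2] using (Matrix.PosSemidef.zero : (0 : Mat dA dB).PosSemidef)
  -- trace computations
  have htrWP : ((W * P).trace).re = r⁻¹ * q.re := by
    rw [hP, Matrix.mul_smul, Matrix.trace_smul, trace_mul_vecMulVec', ← hq, smul_eq_mul,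
      ← Complex.ofReal_inv, Complex.re_ofReal_mul]
  have htrWPneg : ((W * P).trace).re < 0 := by
    rw [htrWP]
    exact mul_neg_of_pos_of_neg (by positivity) hqneg
  have hexpand : ∀ (X : Mat dA dB), ((W * X).trace).re =
      ηt μ * ((ρt μ * X).trace).re - ηt ωb * ((ρt ωb * X).trace).re := by
    intro X
    rw [hWdef, Matrix.sub_mul, Matrix.trace_sub, Matrix.smul_mul, Matrix.smul_mul,
      Matrix.trace_smul, Matrix.trace_smul, Complex.sub_re]
    simp [smul_eq_mul, Complex.re_ofReal_mul]
  constructor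
  · -- part 1: a strictly better global POVM
    refine ⟨M, hMpsd, hMsum, ?_⟩
    have hMμ : M μ = 1 - P := by simp [hM]
    have hMωb : M ωb = P := by simp [hM, Ne.symm hμωb]
    have hsplit2 : ∀ ω, ηt ω * ((ρt ω * M ω).trace).re =
        (if ω = μ then ηt μ * ((ρt μ * ((1 : Mat dA dB) - P)).trace).re else 0) +
        (if ω = ωb then ηt ωb * ((ρt ωb * P).trace).re else 0) := by
      intro ω
      by_cases h1 : ω = μ
      · subst h1
        simp [hMμ, hμωb]
      · by_cases h2 : ω = ωb
        · subst h2
          simp [hMωb, Ne.symm hμωb]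
        · simp [hM, h1, h2]
    rw [Finset.sum_congr rfl fun ω _ => hsplit2 ω]
    simp only [Finset.sum_add_distrib, Finset.sum_ite_eq', Finset.mem_univ, if_true]
    have h1 : ((ρt μ * ((1 : Mat dA dB) - P)).trace).re = 1 - ((ρt μ * P).trace).re := by
      rw [Matrix.mul_sub, Matrix.mul_one, Matrix.trace_sub, Complex.sub_re, htr μ]
      simp
    rw [h1]
    have h2 : ηt μ * ((ρt μ * P).trace).re - ηt ωb * ((ρt ωb * P).trace).re < 0 := by
      rw [← hexpand P]
      exact htrWPneg
    nlinarith [h2]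
  · -- part 2: separable upper bound
    intro N hNsep hNsum
    have key : ∀ ω, ηt ω * ((ρt ω * N ω).trace).re ≤ ηt μ * ((ρt μ * N ω).trace).re := by
      intro ω
      have h0 := (hdual ω).2 (N ω) (hNsep ω)
      have h0re : 0 ≤ ((((ηt μ : ℂ) • ρt μ - (ηt ω : ℂ) • ρt ω) * N ω).trace).re :=
        (Complex.le_def.mp h0).1
      clear h0
      rw [Matrix.sub_mul, Matrix.trace_sub, Matrix.smul_mul, Matrix.smul_mul,
        Matrix.trace_smul, Matrix.trace_smul, Complex.sub_re] at h0re
      simp only [smul_eq_mul, Complex.re_ofReal_mul] at h0re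
      linarith
    calc ∑ ω, ηt ω * ((ρt ω * N ω).trace).re
        ≤ ∑ ω, ηt μ * ((ρt μ * N ω).trace).re := Finset.sum_le_sum fun ω _ => key ω
      _ = ηt μ * (∑ ω, (ρt μ * N ω).trace).re := by
          rw [Complex.re_sum, Finset.mul_sum]
      _ = ηt μ := by
          rw [← Matrix.trace_sum, ← Matrix.mul_sum, hNsum, Matrix.mul_one, htr μ]
          simp
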